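/- Let S be a set and let w₁ and w₂ be closed words with letters in S, of lengths k₁ + 1 and k₂ + 1 respectively, whose edge sets satisfy E_{w₁} ∩ E_{w₂} ≠ ∅. Then there exists a closed word w₃ with letters in S of length k₁ + k₂ + 1 such that the multiset of undirected edges traversed by w₃ (with multiplicity) equals the multiset union of the edges traversed by w₁ and by w₂; in particular E_{w₃} = E_{w₁} ∪ E_{w₂}, and for any symmetric array (x_{α,β})_{α,β ∈ S} one has X_{w₃} = X_{w₁} · X_{w₂}. -/

import Mathlib

open Finset

/-- A word of length `k+1` with letters in `S`, encoded as `w : Fin (k+1) → S`, is closed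
if its first and last letters coincide. -/
def IsClosedWord {S : Type*} {k : ℕ} (w : Fin (k + 1) → S) : Prop :=
  w (Fin.last k) = w 0

/-- The multiset of undirected edges traversed (with multiplicity) by the word `w`:
the `j`-th traversed edge is `{w_j, w_{j+1}}`. -/
def wordEdges {S : Type*} {k : ℕ} (w : Fin (k + 1) → S) : Multiset (Sym2 S) :=
  (List.ofFn fun j : Fin k => s(w j.castSucc, w j.succ))

/-- The edge set `E_w` of the word `w`: the set of undirected edges it traverses. -/
def wordEdgeSet {S : Type*} {k : ℕ} (w : Fin (k + 1) → S) : Set (Sym2 S) :=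
  {e | ∃ j : Fin k, e = s(w j.castSucc, w j.succ)}

/-- For a symmetric array `x`, the value `X_w = ∏_{j=0}^{k-1} x_{w_j, w_{j+1}}`. -/
def wordVal {S : Type*} (x : S → S → ℝ) {k : ℕ} (w : Fin (k + 1) → S) : ℝ :=
  ∏ j : Fin k, x (w j.castSucc) (w j.succ)

namespace GlueAux

variable {S : Type*} {m : ℕ}

open Fin.NatCast

lemma ofFn_multiset {α : Type*} {n : ℕ} (f : Fin n → α) :
    ((List.ofFn f : List α) : Multiset α) = ∑ j : Fin n, {f j} := by
  induction n with
  | zero => simp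
  | succ n ih =>
    rw [List.ofFn_succ, Fin.sum_univ_succ, ← ih]
    rfl

/-- periodic extension of a closed word -/
def per (w : Fin (m + 2) → S) (n : ℕ) : S :=
  w ⟨n % (m + 1), Nat.lt_succ_of_lt (Nat.mod_lt n (Nat.succ_pos m))⟩

lemma per_mod (w : Fin (m + 2) → S) (n : ℕ) : per w n = per w (n % (m + 1)) :=
  congrArg w (Fin.ext (Nat.mod_mod_of_dvd n dvd_rfl).symm)

lemma per_period (w : Fin (m + 2) → S) (n : ℕ) : per w (n + (m + 1)) = per w n :=
  congrArg w (Fin.ext (Nat.add_mod_right n (m + 1)))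

lemma per_castSucc (w : Fin (m + 2) → S) (j : Fin (m + 1)) :
    per w j.val = w j.castSucc :=
  congrArg w (Fin.ext (Nat.mod_eq_of_lt j.isLt))

lemma per_succ (w : Fin (m + 2) → S) (hw : IsClosedWord w) (j : Fin (m + 1)) :
    per w (j.val + 1) = w j.succ := by
  have hle : j.val + 1 ≤ m + 1 := j.isLt
  rcases lt_or_eq_of_le hle with h | h
  · exact congrArg w (Fin.ext (by simp [Fin.val_succ, Nat.mod_eq_of_lt h]))
  · have hv : (j.val + 1) % (m + 1) = 0 := by rw [h]; exact Nat.mod_self _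
    have hsucc : j.succ = Fin.last (m + 1) := Fin.ext (by simp [Fin.val_succ, h])
    rw [hsucc, hw]
    exact congrArg w (Fin.ext (by simp [hv]))

lemma per_succ_mod (w : Fin (m + 2) → S) (n : ℕ) :
    per w (n + 1) = per w (n % (m + 1) + 1) := by
  rw [per_mod w (n + 1), per_mod w (n % (m + 1) + 1)]
  congr 1
  conv_lhs => rw [Nat.add_mod]
  conv_rhs => rw [Nat.add_mod, Nat.mod_mod_of_dvd n dvd_rfl]

/-- the `n`-th traversed edge, periodically -/
def Ed (w : Fin (m + 2) → S) (n : ℕ) : Sym2 S := s(per w n, per w (n + 1))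

lemma Ed_mod (w : Fin (m + 2) → S) (n : ℕ) : Ed w n = Ed w (n % (m + 1)) := by
  unfold Ed
  rw [per_mod w n, per_succ_mod w n]

lemma edge_eq (w : Fin (m + 2) → S) (hw : IsClosedWord w) (j : Fin (m + 1)) :
    s(w j.castSucc, w j.succ) = Ed w j.val := by
  unfold Ed
  rw [per_castSucc, per_succ w hw]

/-- rotation of a closed word -/
def rot (w : Fin (m + 2) → S) (r : ℕ) : Fin (m + 2) → S := fun j => per w (j.val + r)

lemma rot_zero (w : Fin (m + 2) → S) (r : ℕ) : rot w r 0 = per w r := by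
  show per w (0 + r) = per w r
  rw [Nat.zero_add]

lemma rot_closed (w : Fin (m + 2) → S) (r : ℕ) : IsClosedWord (rot w r) := by
  show per w ((m + 1) + r) = per w ((0 : Fin (m+2)).val + r)
  rw [Nat.add_comm (m+1) r, per_period]
  norm_num

lemma rot_edge (w : Fin (m + 2) → S) (r : ℕ) (j : Fin (m + 1)) :
    s(rot w r j.castSucc, rot w r j.succ) = Ed w (j.val + r) := by
  show s(per w (j.castSucc.val + r), per w (j.succ.val + r)) = s(per w (j.val + r), per w (j.val + r + 1))
  rw [Fin.coe_castSucc, Fin.val_succ, show j.val + 1 + r = j.val + r + 1 from by omega]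

lemma val_add_natCast (j : Fin (m + 1)) (r : ℕ) :
    (j + (r : Fin (m + 1))).val = (j.val + r) % (m + 1) := by
  rw [Fin.add_def, Fin.val_natCast]
  conv_rhs => rw [Nat.add_mod, Nat.mod_eq_of_lt j.isLt]

lemma prod_shift {M : Type*} [CommMonoid M] (F : ℕ → M)
    (hF : ∀ n, F n = F (n % (m + 1))) (r : ℕ) :
    ∏ j : Fin (m + 1), F (j.val + r) = ∏ j : Fin (m + 1), F j.val := by
  have key : ∀ j : Fin (m + 1),
      F (j.val + r) = F (((Equiv.addRight ((r : Fin (m + 1)))) j).val) := fun j => by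
    simp only [Equiv.coe_addRight]
    rw [val_add_natCast, ← hF]
  rw [Finset.prod_congr rfl (fun j _ => key j)]
  exact Equiv.prod_comp (Equiv.addRight ((r : Fin (m + 1)))) (fun j : Fin (m + 1) => F j.val)

lemma sum_shift {M : Type*} [AddCommMonoid M] (F : ℕ → M)
    (hF : ∀ n, F n = F (n % (m + 1))) (r : ℕ) :
    ∑ j : Fin (m + 1), F (j.val + r) = ∑ j : Fin (m + 1), F j.val := by
  have key : ∀ j : Fin (m + 1),
      F (j.val + r) = F (((Equiv.addRight ((r : Fin (m + 1)))) j).val) := fun j => by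
    simp only [Equiv.coe_addRight]
    rw [val_add_natCast, ← hF]
  rw [Finset.sum_congr rfl (fun j _ => key j)]
  exact Equiv.sum_comp (Equiv.addRight ((r : Fin (m + 1)))) (fun j : Fin (m + 1) => F j.val)

lemma wordEdges_rot (w : Fin (m + 2) → S) (hw : IsClosedWord w) (r : ℕ) :
    wordEdges (rot w r) = wordEdges w := by
  rw [wordEdges, wordEdges, ofFn_multiset, ofFn_multiset]
  calc ∑ j : Fin (m + 1), ({s(rot w r j.castSucc, rot w r j.succ)} : Multiset (Sym2 S))
      = ∑ j : Fin (m + 1), {Ed w (j.val + r)} :=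
        Finset.sum_congr rfl fun j _ => by rw [rot_edge]
    _ = ∑ j : Fin (m + 1), {Ed w j.val} :=
        sum_shift (fun n => ({Ed w n} : Multiset (Sym2 S)))
          (fun n => congrArg (fun e => ({e} : Multiset (Sym2 S))) (Ed_mod w n)) r
    _ = ∑ j : Fin (m + 1), {s(w j.castSucc, w j.succ)} :=
        Finset.sum_congr rfl fun j _ => by rw [edge_eq w hw]

lemma wordVal_rot (x : S → S → ℝ) (w : Fin (m + 2) → S) (hw : IsClosedWord w) (r : ℕ) :
    wordVal x (rot w r) = wordVal x w := by
  rw [wordVal, wordVal]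
  calc ∏ j : Fin (m + 1), x (rot w r j.castSucc) (rot w r j.succ)
      = ∏ j : Fin (m + 1), x (per w (j.val + r)) (per w (j.val + r + 1)) :=
        Finset.prod_congr rfl fun j _ => by
          show x (per w (j.castSucc.val + r)) (per w (j.succ.val + r)) = _
          rw [Fin.coe_castSucc, Fin.val_succ, show j.val + 1 + r = j.val + r + 1 from by omega]
    _ = ∏ j : Fin (m + 1), x (per w j.val) (per w (j.val + 1)) :=
        prod_shift (fun n => x (per w n) (per w (n + 1)))
          (fun n => by
            show x (per w n) (per w (n + 1)) = x (per w (n % (m + 1))) (per w (n % (m + 1) + 1))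
            rw [per_mod w n, per_succ_mod w n]) r
    _ = ∏ j : Fin (m + 1), x (w j.castSucc) (w j.succ) :=
        Finset.prod_congr rfl fun j _ => by rw [per_castSucc, per_succ w hw]

lemma wordEdgeSet_rot (w : Fin (m + 2) → S) (hw : IsClosedWord w) (r : ℕ) :
    wordEdgeSet (rot w r) = wordEdgeSet w := by
  ext e
  simp only [wordEdgeSet, Set.mem_setOf_eq]
  constructor
  · rintro ⟨j, rfl⟩
    refine ⟨⟨(j.val + r) % (m + 1), Nat.mod_lt _ (Nat.succ_pos m)⟩, ?_⟩
    rw [edge_eq w hw, rot_edge, Ed_mod]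
  · rintro ⟨j, rfl⟩
    refine ⟨j - (r : Fin (m + 1)), ?_⟩
    rw [edge_eq w hw, rot_edge, Ed_mod w ((j - (r : Fin (m+1))).val + r),
        ← val_add_natCast, sub_add_cancel]

end GlueAux

namespace Concat

variable {S : Type*} {k₁ k₂ : ℕ}

/-- concatenation of two closed words with the same base point -/
def glue (u₁ : Fin (k₁ + 1) → S) (u₂ : Fin (k₂ + 1) → S) : Fin (k₁ + k₂ + 1) → S :=
  fun j => if h : j.val < k₁ then u₁ ⟨j.val, by omega⟩ else u₂ ⟨j.val - k₁, by omega⟩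

lemma glue_left_castSucc (u₁ : Fin (k₁ + 1) → S) (u₂ : Fin (k₂ + 1) → S) (i : Fin k₁) :
    glue u₁ u₂ (Fin.castAdd k₂ i).castSucc = u₁ i.castSucc := by
  unfold glue
  rw [dif_pos (show ((Fin.castAdd k₂ i).castSucc).val < k₁ by simp [i.isLt])]
  exact congrArg u₁ (Fin.ext (by simp))

lemma glue_left_succ (u₁ : Fin (k₁ + 1) → S) (u₂ : Fin (k₂ + 1) → S)
    (h₁ : IsClosedWord u₁) (h0 : u₁ 0 = u₂ 0) (i : Fin k₁) :
    glue u₁ u₂ (Fin.castAdd k₂ i).succ = u₁ i.succ := by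
  unfold glue
  have hv : ((Fin.castAdd k₂ i).succ).val = i.val + 1 := by simp
  rcases lt_or_eq_of_le (show i.val + 1 ≤ k₁ from i.isLt) with h | h
  · rw [dif_pos (show ((Fin.castAdd k₂ i).succ).val < k₁ by omega)]
    exact congrArg u₁ (Fin.ext (by simp [hv]))
  · rw [dif_neg (show ¬ ((Fin.castAdd k₂ i).succ).val < k₁ by omega)]
    have h2 : i.succ = Fin.last k₁ := Fin.ext (by simpa using h)
    rw [h2, h₁, h0]
    exact congrArg u₂ (Fin.ext (by simp [hv]))

lemma glue_right_castSucc (u₁ : Fin (k₁ + 1) → S) (u₂ : Fin (k₂ + 1) → S) (i : Fin k₂) :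
    glue u₁ u₂ (Fin.natAdd k₁ i).castSucc = u₂ i.castSucc := by
  unfold glue
  rw [dif_neg (show ¬ ((Fin.natAdd k₁ i).castSucc).val < k₁ by simp)]
  exact congrArg u₂ (Fin.ext (by simp))

lemma glue_right_succ (u₁ : Fin (k₁ + 1) → S) (u₂ : Fin (k₂ + 1) → S) (i : Fin k₂) :
    glue u₁ u₂ (Fin.natAdd k₁ i).succ = u₂ i.succ := by
  unfold glue
  have hv : ((Fin.natAdd k₁ i).succ).val = k₁ + i.val + 1 := by simp
  rw [dif_neg (show ¬ ((Fin.natAdd k₁ i).succ).val < k₁ by omega)]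
  exact congrArg u₂ (Fin.ext (by simp [hv]; omega))

lemma glue_edge_left (u₁ : Fin (k₁ + 1) → S) (u₂ : Fin (k₂ + 1) → S)
    (h₁ : IsClosedWord u₁) (h0 : u₁ 0 = u₂ 0) (i : Fin k₁) :
    s(glue u₁ u₂ (Fin.castAdd k₂ i).castSucc, glue u₁ u₂ (Fin.castAdd k₂ i).succ)
      = s(u₁ i.castSucc, u₁ i.succ) := by
  rw [glue_left_castSucc, glue_left_succ u₁ u₂ h₁ h0]

lemma glue_edge_right (u₁ : Fin (k₁ + 1) → S) (u₂ : Fin (k₂ + 1) → S) (i : Fin k₂) :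
    s(glue u₁ u₂ (Fin.natAdd k₁ i).castSucc, glue u₁ u₂ (Fin.natAdd k₁ i).succ)
      = s(u₂ i.castSucc, u₂ i.succ) := by
  rw [glue_right_castSucc, glue_right_succ]

lemma glue_closed (u₁ : Fin (k₁ + 1) → S) (u₂ : Fin (k₂ + 1) → S)
    (h₂ : IsClosedWord u₂) (h0 : u₁ 0 = u₂ 0) :
    IsClosedWord (glue u₁ u₂) := by
  unfold IsClosedWord glue
  rw [dif_neg (show ¬ (Fin.last (k₁ + k₂)).val < k₁ by simp)]
  have hlast : u₂ ⟨(Fin.last (k₁ + k₂)).val - k₁, by omega⟩ = u₂ 0 := by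
    rw [show (⟨(Fin.last (k₁ + k₂)).val - k₁, by omega⟩ : Fin (k₂ + 1)) = Fin.last k₂ from
      Fin.ext (by simp), h₂]
  rw [hlast]
  by_cases h : (0 : Fin (k₁ + k₂ + 1)).val < k₁
  · rw [dif_pos h]
    rw [show (⟨(0 : Fin (k₁ + k₂ + 1)).val, by omega⟩ : Fin (k₁ + 1)) = 0 from Fin.ext (by simp)]
    exact h0.symm
  · rw [dif_neg h]
    exact congrArg u₂ (Fin.ext (by simp))

lemma glue_wordEdges (u₁ : Fin (k₁ + 1) → S) (u₂ : Fin (k₂ + 1) → S)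
    (h₁ : IsClosedWord u₁) (h0 : u₁ 0 = u₂ 0) :
    wordEdges (glue u₁ u₂) = wordEdges u₁ + wordEdges u₂ := by
  rw [wordEdges, wordEdges, wordEdges, GlueAux.ofFn_multiset, GlueAux.ofFn_multiset,
    GlueAux.ofFn_multiset, Fin.sum_univ_add]
  congr 1
  · exact Finset.sum_congr rfl fun i _ => by rw [glue_edge_left u₁ u₂ h₁ h0]
  · exact Finset.sum_congr rfl fun i _ => by rw [glue_edge_right u₁ u₂]

lemma glue_wordVal (x : S → S → ℝ) (u₁ : Fin (k₁ + 1) → S) (u₂ : Fin (k₂ + 1) → S)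
    (h₁ : IsClosedWord u₁) (h0 : u₁ 0 = u₂ 0) :
    wordVal x (glue u₁ u₂) = wordVal x u₁ * wordVal x u₂ := by
  rw [wordVal, wordVal, wordVal, Fin.prod_univ_add]
  congr 1
  · exact Finset.prod_congr rfl fun i _ => by
      rw [glue_left_castSucc, glue_left_succ u₁ u₂ h₁ h0]
  · exact Finset.prod_congr rfl fun i _ => by
      rw [glue_right_castSucc, glue_right_succ]

lemma glue_wordEdgeSet (u₁ : Fin (k₁ + 1) → S) (u₂ : Fin (k₂ + 1) → S)
    (h₁ : IsClosedWord u₁) (h0 : u₁ 0 = u₂ 0) :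
    wordEdgeSet (glue u₁ u₂) = wordEdgeSet u₁ ∪ wordEdgeSet u₂ := by
  ext e
  simp only [wordEdgeSet, Set.mem_setOf_eq, Set.mem_union]
  constructor
  · rintro ⟨j, rfl⟩
    by_cases h : j.val < k₁
    · have hj : j = Fin.castAdd k₂ ⟨j.val, h⟩ := Fin.ext (by simp)
      refine Or.inl ⟨⟨j.val, h⟩, ?_⟩
      rw [← glue_edge_left u₁ u₂ h₁ h0 ⟨j.val, h⟩]
      exact congrArg (fun t => s(glue u₁ u₂ t.castSucc, glue u₁ u₂ t.succ)) hj
    · have hj : j = Fin.natAdd k₁ ⟨j.val - k₁, by omega⟩ := Fin.ext (by simp; omega)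
      refine Or.inr ⟨⟨j.val - k₁, by omega⟩, ?_⟩
      rw [← glue_edge_right u₁ u₂ ⟨j.val - k₁, by omega⟩]
      exact congrArg (fun t => s(glue u₁ u₂ t.castSucc, glue u₁ u₂ t.succ)) hj
  · rintro (⟨i, rfl⟩ | ⟨i, rfl⟩)
    · exact ⟨Fin.castAdd k₂ i, (glue_edge_left u₁ u₂ h₁ h0 i).symm⟩
    · exact ⟨Fin.natAdd k₁ i, (glue_edge_right u₁ u₂ i).symm⟩

end Concat

/-- (Gluing of two closed words sharing an edge.) If `w₁` and `w₂` are
closed words with letters in `S` of lengths `k₁+1` and `k₂+1` whose edge sets intersect,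
then there is a closed word `w₃` of length `k₁+k₂+1` whose multiset of traversed edges
(with multiplicity) is the multiset union of those of `w₁` and `w₂`; in particular
`E_{w₃} = E_{w₁} ∪ E_{w₂}` and `X_{w₃} = X_{w₁} · X_{w₂}` for every symmetric array `x`. -/
theorem closed_words_sharing_edge_glue {S : Type*} {k₁ k₂ : ℕ}
    (w₁ : Fin (k₁ + 1) → S) (w₂ : Fin (k₂ + 1) → S)
    (h₁ : IsClosedWord w₁) (h₂ : IsClosedWord w₂)
    (hshare : (wordEdgeSet w₁ ∩ wordEdgeSet w₂).Nonempty) :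
    ∃ w₃ : Fin (k₁ + k₂ + 1) → S,
      IsClosedWord w₃ ∧
      wordEdges w₃ = wordEdges w₁ + wordEdges w₂ ∧
      wordEdgeSet w₃ = wordEdgeSet w₁ ∪ wordEdgeSet w₂ ∧
      ∀ x : S → S → ℝ, (∀ a b, x a b = x b a) →
        wordVal x w₃ = wordVal x w₁ * wordVal x w₂ := by
  obtain ⟨e, ⟨j₁, he₁⟩, ⟨j₂, he₂⟩⟩ := hshare
  obtain ⟨m₁, rfl⟩ : ∃ m, k₁ = m + 1 := ⟨k₁ - 1, by have := j₁.isLt; omega⟩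
  obtain ⟨m₂, rfl⟩ : ∃ m, k₂ = m + 1 := ⟨k₂ - 1, by have := j₂.isLt; omega⟩
  have hkey : s(w₁ j₁.castSucc, w₁ j₁.succ) = s(w₂ j₂.castSucc, w₂ j₂.succ) :=
    he₁.symm.trans he₂
  rw [Sym2.eq_iff] at hkey
  have hvert : ∃ r₁ r₂ : ℕ, GlueAux.per w₁ r₁ = GlueAux.per w₂ r₂ := by
    rcases hkey with ⟨ha, _⟩ | ⟨ha, _⟩
    · exact ⟨j₁.val, j₂.val, by
        rw [GlueAux.per_castSucc, GlueAux.per_castSucc, ha]⟩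
    · exact ⟨j₁.val, j₂.val + 1, by
        rw [GlueAux.per_castSucc, GlueAux.per_succ w₂ h₂, ha]⟩
  obtain ⟨r₁, r₂, hr⟩ := hvert
  set u₁ := GlueAux.rot w₁ r₁ with hu₁
  set u₂ := GlueAux.rot w₂ r₂ with hu₂
  have hc₁ : IsClosedWord u₁ := GlueAux.rot_closed w₁ r₁
  have hc₂ : IsClosedWord u₂ := GlueAux.rot_closed w₂ r₂
  have hu0 : u₁ 0 = u₂ 0 := by
    rw [hu₁, hu₂, GlueAux.rot_zero, GlueAux.rot_zero, hr]
  refine ⟨Concat.glue u₁ u₂, Concat.glue_closed u₁ u₂ hc₂ hu0, ?_, ?_, ?_⟩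
  · rw [Concat.glue_wordEdges u₁ u₂ hc₁ hu0, hu₁, hu₂,
      GlueAux.wordEdges_rot w₁ h₁ r₁, GlueAux.wordEdges_rot w₂ h₂ r₂]
  · rw [Concat.glue_wordEdgeSet u₁ u₂ hc₁ hu0, hu₁, hu₂,
      GlueAux.wordEdgeSet_rot w₁ h₁ r₁, GlueAux.wordEdgeSet_rot w₂ h₂ r₂]
  · intro x _
    rw [Concat.glue_wordVal x u₁ u₂ hc₁ hu0, hu₁, hu₂,
      GlueAux.wordVal_rot x w₁ h₁ r₁, GlueAux.wordVal_rot x w₂ h₂ r₂]
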